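/- Let E be a finite-dimensional real inner product space, Ω ⊆ E a nonempty, closed, bounded and convex set, and ρ a norm on E. The following are equivalent: (i) there exists x₀ ∈ E for which the problem inf{ρ(x₀ − x) : x ∈ Ω} has more than one minimizer; (ii) there exist a nonzero vector a ∈ E, distinct points w₁, w₂ ∈ Ω, points u₁, u₂ on the unit sphere {u : ρ(u) = 1}, and a real number r ≠ 0 such that: (a) Ω ⊆ {x : x·a ≥ w₁·a} and the segment [w₁, w₂] ⊆ {x : x·a = w₁·a}; (b) the closed unit ball {x : ρ(x) ≤ 1} ⊆ {x : x·a ≤ u₁·a} and the segment [u₁, u₂] ⊆ {x : x·a = u₁·a}; (c) w₁ − w₂ = r(u₁ − u₂). -/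

import Mathlib

open Filter Topology

private lemma rho_cont {E : Type*} [NormedAddCommGroup E] [NormedSpace ℝ E]
    [FiniteDimensional ℝ E]
    (ρ : E → ℝ) (hρ_add : ∀ x y, ρ (x + y) ≤ ρ x + ρ y)
    (hρ_smul : ∀ (c : ℝ) (x : E), ρ (c • x) = |c| * ρ x) : Continuous ρ := by
  have hρ0 : ρ 0 = 0 := by simpa using hρ_smul 0 0
  have hρ_neg : ∀ x, ρ (-x) = ρ x := fun x => by simpa using hρ_smul (-1) x
  have hsum : ∀ (s : Finset (Fin (Module.finrank ℝ E))) (g : Fin (Module.finrank ℝ E) → E),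
      ρ (∑ i ∈ s, g i) ≤ ∑ i ∈ s, ρ (g i) := by
    intro s g
    induction s using Finset.cons_induction with
    | empty => simp [hρ0]
    | cons i s his ih =>
      rw [Finset.sum_cons, Finset.sum_cons]
      exact (hρ_add _ _).trans (by linarith)
  set b := Module.finBasis ℝ E with hb
  set g : E → ℝ := fun v => ∑ i, |b.coord i v| * ρ (b i) with hg
  have hbound : ∀ v, ρ v ≤ g v := by
    intro v
    calc ρ v = ρ (∑ i, b.repr v i • b i) := by rw [b.sum_repr v]
    _ ≤ ∑ i, ρ (b.repr v i • b i) := hsum _ _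
    _ = g v := by simp [hg, hρ_smul, Module.Basis.coord_apply]
  have hgcont : Continuous g := by
    apply continuous_finset_sum
    intro i _
    exact (((b.coord i).continuous_of_finiteDimensional).abs).mul continuous_const
  have hg0 : g 0 = 0 := by simp [hg]
  rw [continuous_iff_continuousAt]
  intro x
  have h1 : Tendsto (fun y => ρ y - ρ x) (𝓝 x) (𝓝 0) := by
    apply squeeze_zero_norm (a := fun y => g (y - x))
    · intro y
      rw [Real.norm_eq_abs, abs_sub_le_iff]
      constructor
      · have := hρ_add x (y - x); simp at this
        linarith [hbound (y - x)]
      · have := hρ_add y (x - y); simp at this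
        have h2 : ρ (x - y) = ρ (y - x) := by rw [← hρ_neg (y - x), neg_sub]
        linarith [hbound (y - x)]
    · have : Tendsto (fun y => y - x) (𝓝 x) (𝓝 0) := by
        have := ((continuous_id.sub continuous_const).tendsto x :
          Tendsto (fun y => y - x) (𝓝 x) (𝓝 (x - x)))
        convert this using 2 <;> simp
      have h := hgcont.continuousAt.tendsto.comp this; rw [hg0] at h; exact h
  have := h1.add (tendsto_const_nhds (x := ρ x))
  simpa [ContinuousAt] using this



/-- Let `E` be a finite-dimensional real inner product space,
`Ω ⊆ E` nonempty, closed, bounded and convex, and `ρ` a norm on `E`. TFAE: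
(i) there exists `x₀ ∈ E` for which `inf {ρ(x₀ − x) : x ∈ Ω}` has more than one
minimizer; (ii) there exist a nonzero `a ∈ E`, distinct `w₁, w₂ ∈ Ω`, points
`u₁, u₂` with `ρ(u₁) = ρ(u₂) = 1`, and `r ≠ 0` such that (a) `Ω ⊆ {x : x·a ≥ w₁·a}`
and `[w₁, w₂] ⊆ {x : x·a = w₁·a}`; (b) `{x : ρ(x) ≤ 1} ⊆ {x : x·a ≤ u₁·a}` and
`[u₁, u₂] ⊆ {x : x·a = u₁·a}`; (c) `w₁ − w₂ = r (u₁ − u₂)`. -/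
theorem stmt_16 {E : Type*} [NormedAddCommGroup E] [InnerProductSpace ℝ E]
    [FiniteDimensional ℝ E]
    (Ω : Set E) (hΩne : Ω.Nonempty) (hΩclosed : IsClosed Ω)
    (hΩbdd : Bornology.IsBounded Ω) (hΩconv : Convex ℝ Ω)
    (ρ : E → ℝ)
    (hρ_add : ∀ x y, ρ (x + y) ≤ ρ x + ρ y)
    (hρ_smul : ∀ (c : ℝ) (x : E), ρ (c • x) = |c| * ρ x)
    (hρ_def : ∀ x, ρ x = 0 → x = 0) :
    (∃ x₀ : E, ∃ w₁ ∈ Ω, ∃ w₂ ∈ Ω, w₁ ≠ w₂ ∧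
        (∀ z ∈ Ω, ρ (x₀ - w₁) ≤ ρ (x₀ - z)) ∧
        (∀ z ∈ Ω, ρ (x₀ - w₂) ≤ ρ (x₀ - z)))
    ↔ (∃ a : E, a ≠ 0 ∧ ∃ w₁ ∈ Ω, ∃ w₂ ∈ Ω, w₁ ≠ w₂ ∧
        ∃ u₁ u₂ : E, ρ u₁ = 1 ∧ ρ u₂ = 1 ∧ ∃ r : ℝ, r ≠ 0 ∧
          (∀ x ∈ Ω, (inner ℝ w₁ a : ℝ) ≤ (inner ℝ x a : ℝ)) ∧
          (∀ x ∈ segment ℝ w₁ w₂, (inner ℝ x a : ℝ) = (inner ℝ w₁ a : ℝ)) ∧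
          (∀ x : E, ρ x ≤ 1 → (inner ℝ x a : ℝ) ≤ (inner ℝ u₁ a : ℝ)) ∧
          (∀ x ∈ segment ℝ u₁ u₂, (inner ℝ x a : ℝ) = (inner ℝ u₁ a : ℝ)) ∧
          w₁ - w₂ = r • (u₁ - u₂)) := by
  have hρ0 : ρ 0 = 0 := by simpa using hρ_smul 0 0
  have hρ_neg : ∀ x, ρ (-x) = ρ x := fun x => by simpa using hρ_smul (-1) x
  have hρ_nonneg : ∀ x, 0 ≤ ρ x := by
    intro x
    have h := hρ_add x (-x)
    rw [add_neg_cancel, hρ0, hρ_neg] at h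
    linarith
  constructor
  · -- forward direction
    rintro ⟨x₀, w₁, hw₁, w₂, hw₂, hne, hmin₁, hmin₂⟩
    set d : ℝ := ρ (x₀ - w₁) with hd
    have hd₂ : ρ (x₀ - w₂) = d := le_antisymm (hmin₂ w₁ hw₁) (hmin₁ w₂ hw₂)
    have hdpos : 0 < d := by
      rcases lt_or_eq_of_le (hρ_nonneg (x₀ - w₁)) with h | h
      · exact h
      · exfalso
        have h1 : x₀ - w₁ = 0 := hρ_def _ h.symm
        have h2 : x₀ - w₂ = 0 := hρ_def _ (by rw [hd₂, hd]; exact h.symm)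
        exact hne (by rw [sub_eq_zero] at h1 h2; rw [← h1, ← h2])
    -- the open ρ-ball around x₀ of radius d
    set S : Set E := {x | ρ (x - x₀) < d} with hS
    have hScont : Continuous ρ := rho_cont ρ hρ_add hρ_smul
    have hSopen : IsOpen S := by
      have : Continuous fun x => ρ (x - x₀) :=
        hScont.comp (continuous_id.sub continuous_const)
      exact isOpen_lt this continuous_const
    have hSconv : Convex ℝ S := by
      intro x hx y hy s t hs ht hst
      simp only [hS, Set.mem_setOf_eq] at hx hy ⊢
      have h' : (s + t) • x₀ = x₀ := by rw [hst, one_smul]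
      have key : s • x + t • y - x₀ = s • (x - x₀) + t • (y - x₀) := by
        calc s • x + t • y - x₀ = s • x + t • y - (s + t) • x₀ := by rw [h']
        _ = s • (x - x₀) + t • (y - x₀) := by module
      rw [key]
      calc ρ (s • (x - x₀) + t • (y - x₀)) ≤ ρ (s • (x - x₀)) + ρ (t • (y - x₀)) :=
            hρ_add _ _
      _ = s * ρ (x - x₀) + t * ρ (y - x₀) := by
            rw [hρ_smul, hρ_smul, abs_of_nonneg hs, abs_of_nonneg ht]
      _ < d := by
            rcases eq_or_lt_of_le hs with h | h
            · rw [← h] at hst ⊢; simp at hst; rw [hst]; simpa using hy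
            · nlinarith [hρ_nonneg (y - x₀)]
    have hdisj : Disjoint S Ω := by
      rw [Set.disjoint_left]
      intro z hz hzΩ
      have h1 : ρ (x₀ - z) = ρ (z - x₀) := by rw [← hρ_neg (z - x₀), neg_sub]
      have := hmin₁ z hzΩ
      simp only [hS, Set.mem_setOf_eq] at hz
      rw [h1] at this
      linarith
    obtain ⟨f, u, hfS, hfΩ⟩ := geometric_hahn_banach_open hSconv hSopen hΩconv hdisj
    obtain ⟨a, haf⟩ : ∃ a : E, ∀ x : E, (inner ℝ x a : ℝ) = f x := by
      refine ⟨(InnerProductSpace.toDual ℝ E).symm f, fun x => ?_⟩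
      rw [real_inner_comm, ← InnerProductSpace.toDual_apply_apply,
        LinearIsometryEquiv.apply_symm_apply]
    have hx₀S : x₀ ∈ S := by simp [hS, hρ0, hdpos]
    have hfx₀ : f x₀ < u := hfS x₀ hx₀S
    -- the limit lemma
    have lim : ∀ c e : ℝ, (∀ t : ℝ, 0 ≤ t → t < 1 → c + t * e < u) → c + e ≤ u := by
      intro c e h
      by_contra hcon
      push_neg at hcon
      have hc : c < u := by simpa using h 0 le_rfl one_pos
      have he : 0 < e := by nlinarith
      have ht1 : (u - c) / e < 1 := by rw [div_lt_one he]; linarith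
      have ht0 : 0 ≤ (u - c) / e := div_nonneg (by linarith) he.le
      have := h _ ht0 ht1
      rw [div_mul_cancel₀ _ he.ne'] at this
      linarith
    -- f equals u on the boundary points w₁, w₂
    have hbdry : ∀ w : E, ρ (x₀ - w) = d → f w ≤ u := by
      intro w hw
      have key : ∀ t : ℝ, 0 ≤ t → t < 1 → f x₀ + t * f (w - x₀) < u := by
        intro t ht0 ht1
        have hmem : x₀ + t • (w - x₀) ∈ S := by
          simp only [hS, Set.mem_setOf_eq, add_sub_cancel_left]
          rw [hρ_smul, abs_of_nonneg ht0]
          have hww : ρ (w - x₀) = d := by rw [← hρ_neg (w - x₀), neg_sub, hw]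
          rw [hww]
          rcases eq_or_lt_of_le ht0 with h | h
          · rw [← h]; simpa using hdpos
          · calc t * d < 1 * d := by nlinarith
            _ = d := one_mul d
        have := hfS _ hmem
        rwa [map_add, map_smul, smul_eq_mul] at this
      have := lim (f x₀) (f (w - x₀)) key
      rw [map_sub] at this
      linarith
    have hfw₁ : f w₁ = u := le_antisymm (hbdry w₁ rfl) (hfΩ w₁ hw₁)
    have hfw₂ : f w₂ = u := le_antisymm (hbdry w₂ hd₂) (hfΩ w₂ hw₂)
    have hane : a ≠ 0 := by
      intro h0
      have h1 : (inner ℝ x₀ a : ℝ) = f x₀ := haf x₀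
      have h2 : (inner ℝ w₁ a : ℝ) = f w₁ := haf w₁
      rw [h0, inner_zero_right] at h1 h2
      rw [hfw₁] at h2
      rw [← h1, ← h2] at hfx₀
      exact lt_irrefl _ hfx₀
    have hρu₁ : ρ (d⁻¹ • (w₁ - x₀)) = 1 := by
      rw [hρ_smul, abs_of_nonneg (inv_nonneg.2 hdpos.le)]
      have hww : ρ (w₁ - x₀) = d := by rw [← hρ_neg (w₁ - x₀), neg_sub]
      rw [hww, inv_mul_cancel₀ hdpos.ne']
    have hρu₂ : ρ (d⁻¹ • (w₂ - x₀)) = 1 := by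
      rw [hρ_smul, abs_of_nonneg (inv_nonneg.2 hdpos.le)]
      have hww : ρ (w₂ - x₀) = d := by rw [← hρ_neg (w₂ - x₀), neg_sub, hd₂]
      rw [hww, inv_mul_cancel₀ hdpos.ne']
    have hfu₁ : f (d⁻¹ • (w₁ - x₀)) = d⁻¹ * (u - f x₀) := by
      rw [map_smul, smul_eq_mul, map_sub, hfw₁]
    have hfu₂ : f (d⁻¹ • (w₂ - x₀)) = d⁻¹ * (u - f x₀) := by
      rw [map_smul, smul_eq_mul, map_sub, hfw₂]
    refine ⟨a, hane, w₁, hw₁, w₂, hw₂, hne, d⁻¹ • (w₁ - x₀), d⁻¹ • (w₂ - x₀),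
      hρu₁, hρu₂, d, hdpos.ne', ?_, ?_, ?_, ?_, ?_⟩
    · intro x hx
      rw [haf, haf, hfw₁]
      exact hfΩ x hx
    · rintro x ⟨s, t, hs, ht, hst, rfl⟩
      rw [haf, haf]
      have e1 : f (s • w₁ + t • w₂) = s * f w₁ + t * f w₂ := by
        rw [map_add, map_smul, map_smul, smul_eq_mul, smul_eq_mul]
      rw [e1, hfw₁, hfw₂]
      linear_combination u * hst
    · intro x hx
      rw [haf, haf, hfu₁]
      have key : ∀ t : ℝ, 0 ≤ t → t < 1 → f x₀ + t * f (d • x) < u := by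
        intro t ht0 ht1
        have hmem : x₀ + t • (d • x) ∈ S := by
          simp only [hS, Set.mem_setOf_eq, add_sub_cancel_left]
          rw [smul_smul, hρ_smul, abs_of_nonneg (by positivity)]
          rcases eq_or_lt_of_le ht0 with h | h
          · rw [← h]; simpa using hdpos
          · calc t * d * ρ x ≤ t * d * 1 :=
                  mul_le_mul_of_nonneg_left hx (by positivity)
            _ = t * d := mul_one _
            _ < 1 * d := by nlinarith
            _ = d := one_mul d
        have := hfS _ hmem
        rwa [map_add, map_smul, smul_eq_mul] at this
      have h2 := lim (f x₀) (f (d • x)) key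
      rw [map_smul, smul_eq_mul] at h2
      have h4 : (u - f x₀) / d = d⁻¹ * (u - f x₀) := by ring
      rw [← h4]
      rw [le_div_iff₀ hdpos]
      nlinarith
    · rintro x ⟨s, t, hs, ht, hst, rfl⟩
      rw [haf, haf]
      have e1 : f (s • (d⁻¹ • (w₁ - x₀)) + t • (d⁻¹ • (w₂ - x₀)))
          = s * (d⁻¹ * (u - f x₀)) + t * (d⁻¹ * (u - f x₀)) := by
        simp only [map_add, map_smul, smul_eq_mul, map_sub, hfw₁, hfw₂]
        try ring
      rw [e1, hfu₁]
      linear_combination (d⁻¹ * (u - f x₀)) * hst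
    · rw [smul_sub, smul_smul, smul_smul, mul_inv_cancel₀ hdpos.ne', one_smul, one_smul]
      abel
  · -- reverse direction
    rintro ⟨a, ha, w₁, hw₁, w₂, hw₂, hne, u₁, u₂, hu₁, hu₂, r, hr, hA, hAseg, hB, hBseg, hrel⟩
    have key : ∀ (U₁ U₂ : E), ρ U₁ = 1 → ρ U₂ = 1 →
        (∀ x : E, ρ x ≤ 1 → (inner ℝ x a : ℝ) ≤ (inner ℝ U₁ a : ℝ)) →
        ∀ s : ℝ, 0 < s → w₁ - w₂ = s • (U₁ - U₂) →
        (∃ x₀ : E, ∃ w₁ ∈ Ω, ∃ w₂ ∈ Ω, w₁ ≠ w₂ ∧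
          (∀ z ∈ Ω, ρ (x₀ - w₁) ≤ ρ (x₀ - z)) ∧
          (∀ z ∈ Ω, ρ (x₀ - w₂) ≤ ρ (x₀ - z))) := by
      intro U₁ U₂ hU₁ hU₂ hBall s hs hsrel
      set c : ℝ := (inner ℝ U₁ a : ℝ) with hc
      have hρa : 0 < ρ a := by
        rcases lt_or_eq_of_le (hρ_nonneg a) with h | h
        · exact h
        · exact absurd (hρ_def a h.symm) ha
      have hcpos : 0 < c := by
        have h1 : ρ ((ρ a)⁻¹ • a) ≤ 1 := by
          rw [hρ_smul, abs_of_nonneg (inv_nonneg.2 hρa.le), inv_mul_cancel₀ hρa.ne']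
        have h2 := hBall _ h1
        rw [real_inner_smul_left] at h2
        have h3 : (0:ℝ) < (inner ℝ a a : ℝ) :=
          lt_of_le_of_ne real_inner_self_nonneg
            (fun h => ha (inner_self_eq_zero.1 h.symm))
        calc (0:ℝ) < (ρ a)⁻¹ * (inner ℝ a a : ℝ) := by positivity
        _ ≤ c := h2
      have hub : ∀ v : E, (inner ℝ v a : ℝ) ≤ c * ρ v := by
        intro v
        rcases eq_or_ne v 0 with rfl | hv
        · simp [hρ0]
        · have hρv : 0 < ρ v := by
            rcases lt_or_eq_of_le (hρ_nonneg v) with h | h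
            · exact h
            · exact absurd (hρ_def v h.symm) hv
          have h1 : ρ ((ρ v)⁻¹ • v) ≤ 1 := by
            rw [hρ_smul, abs_of_nonneg (inv_nonneg.2 hρv.le), inv_mul_cancel₀ hρv.ne']
          have h2 := hBall _ h1
          rw [real_inner_smul_left] at h2
          have h3 := mul_le_mul_of_nonneg_left h2 hρv.le
          rw [← mul_assoc, mul_inv_cancel₀ hρv.ne', one_mul] at h3
          linarith
      have hval₁ : ρ (w₁ - s • U₁ - w₁) = s := by
        have e : w₁ - s • U₁ - w₁ = (-s) • U₁ := by module
        rw [e, hρ_smul, hU₁, abs_neg, abs_of_nonneg hs.le, mul_one]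
      have hval₂ : ρ (w₁ - s • U₁ - w₂) = s := by
        have e : w₁ - s • U₁ - w₂ = (w₁ - w₂) - s • U₁ := by module
        rw [e, hsrel]
        have e2 : s • (U₁ - U₂) - s • U₁ = (-s) • U₂ := by module
        rw [e2, hρ_smul, hU₂, abs_neg, abs_of_nonneg hs.le, mul_one]
      have hlower : ∀ z ∈ Ω, s ≤ ρ (w₁ - s • U₁ - z) := by
        intro z hz
        have h1 : (inner ℝ (z - (w₁ - s • U₁)) a : ℝ)
            = ((inner ℝ z a : ℝ) - (inner ℝ w₁ a : ℝ)) + s * c := by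
          have e : z - (w₁ - s • U₁) = (z - w₁) + s • U₁ := by module
          rw [e, inner_add_left, inner_sub_left, real_inner_smul_left, hc]
        have h2 : s * c ≤ (inner ℝ (z - (w₁ - s • U₁)) a : ℝ) := by
          rw [h1]; have := hA z hz; linarith
        have h3 := hub (z - (w₁ - s • U₁))
        have h4 : s ≤ ρ (z - (w₁ - s • U₁)) := by
          by_contra hcon
          push_neg at hcon
          nlinarith
        have h5 : ρ (w₁ - s • U₁ - z) = ρ (z - (w₁ - s • U₁)) := by
          rw [← hρ_neg (z - (w₁ - s • U₁)), neg_sub]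
        rw [h5]; exact h4
      exact ⟨w₁ - s • U₁, w₁, hw₁, w₂, hw₂, hne,
        fun z hz => by rw [hval₁]; exact hlower z hz,
        fun z hz => by rw [hval₂]; exact hlower z hz⟩
    rcases lt_trichotomy r 0 with hr' | hr' | hr'
    · have hu₂a : (inner ℝ u₂ a : ℝ) = (inner ℝ u₁ a : ℝ) :=
        hBseg u₂ (right_mem_segment ℝ u₁ u₂)
      refine key u₂ u₁ hu₂ hu₁ (fun x hx => by rw [hu₂a]; exact hB x hx) (-r)
        (by linarith) ?_
      rw [hrel]; module
    · exact absurd hr' hr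
    · exact key u₁ u₂ hu₁ hu₂ hB r hr' hrel
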